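/- arXiv:0909.4493 — 7 statements merged into one kernel-verified Lean document; each statement's English description precedes it below -/
import Mathlib

section
/- Let L be a sup-lattice and R ⊆ L × L. Then S = {x ∈ L | for all (r₁,r₂) ∈ R, r₁ ≤ x iff r₂ ≤ x} is closed under arbitrary meets, and the quotient of L by the sup-lattice congruence generated by R is isomorphic to the sup-lattice (S, γ_S ∘ ⋁, γ_S(⊥)). -/
def IsSupCongruence {L : Type*} [CompleteLattice L] (r : L → L → Prop) : Prop :=
  Equivalence r ∧
    ∀ S : Set (L × L), (∀ p ∈ S, r p.1 p.2) →
      r (sSup (Prod.fst '' S)) (sSup (Prod.snd '' S))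

theorem stmt_6 (L : Type*) [CompleteLattice L] (R : Set (L × L))
    (S : Set L) (hS : S = {x : L | ∀ p ∈ R, (p.1 ≤ x ↔ p.2 ≤ x)})
    (γ : L → L) (hγ : γ = fun x => sInf {y | y ∈ S ∧ x ≤ y}) :
    (∀ T ⊆ S, sInf T ∈ S) ∧
      (∀ x : L, γ x ∈ S) ∧ (∀ s ∈ S, γ s = s) ∧
      ∃ r : L → L → Prop,
        IsSupCongruence r ∧ (∀ p ∈ R, r p.1 p.2) ∧
          (∀ r' : L → L → Prop, IsSupCongruence r' → (∀ p ∈ R, r' p.1 p.2) →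
            ∀ x y : L, r x y → r' x y) ∧
          ∀ x y : L, r x y ↔ γ x = γ y := by
  have hmem : ∀ x : L, x ∈ S ↔ ∀ p ∈ R, (p.1 ≤ x ↔ p.2 ≤ x) := by
    intro x; rw [hS]; rfl
  have hγle : ∀ x z : L, z ∈ S → x ≤ z → γ x ≤ z := by
    intro x z hz hxz; rw [hγ]; exact sInf_le ⟨hz, hxz⟩
  have hxγ : ∀ x : L, x ≤ γ x := by
    intro x; rw [hγ]; exact le_sInf fun y hy => hy.2
  have hmeet : ∀ T ⊆ S, sInf T ∈ S := by
    intro T hT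
    rw [hmem]
    intro p hp
    simp only [le_sInf_iff]
    exact ⟨fun h t ht => ((hmem t).1 (hT ht) p hp).1 (h t ht),
           fun h t ht => ((hmem t).1 (hT ht) p hp).2 (h t ht)⟩
  have hγS : ∀ x : L, γ x ∈ S := by
    intro x
    rw [hγ]
    exact hmeet {y | y ∈ S ∧ x ≤ y} (fun y hy => hy.1)
  have hfix : ∀ s ∈ S, γ s = s := fun s hs =>
    le_antisymm (hγle s s hs le_rfl) (hxγ s)
  have hmono : ∀ x y : L, x ≤ y → γ x ≤ γ y := fun x y h =>
    hγle x (γ y) (hγS y) (h.trans (hxγ y))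
  have hsupγ : ∀ A : Set L, γ (sSup A) = γ (sSup (γ '' A)) := by
    intro A
    apply le_antisymm
    · exact hmono _ _ (sSup_le fun a ha => (hxγ a).trans (le_sSup ⟨a, ha, rfl⟩))
    · refine hγle _ _ (hγS _) (sSup_le ?_)
      rintro b ⟨a, ha, rfl⟩
      exact hmono a _ (le_sSup ha)
  have hRγ : ∀ p ∈ R, γ p.1 = γ p.2 := by
    intro p hp
    apply le_antisymm
    · exact hγle _ _ (hγS p.2) (((hmem _).1 (hγS p.2) p hp).2 (hxγ p.2))
    · exact hγle _ _ (hγS p.1) (((hmem _).1 (hγS p.1) p hp).1 (hxγ p.1))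
  refine ⟨hmeet, hγS, hfix, fun x y => γ x = γ y, ?_, hRγ, ?_, fun _ _ => Iff.rfl⟩
  · constructor
    · exact ⟨fun x => rfl, fun h => h.symm, fun h1 h2 => h1.trans h2⟩
    · intro T hT
      show γ _ = γ _
      have himg : γ '' (Prod.fst '' T) = γ '' (Prod.snd '' T) := by
        rw [← Set.image_comp, ← Set.image_comp]
        exact Set.image_congr hT
      rw [hsupγ (Prod.fst '' T), hsupγ (Prod.snd '' T), himg]
  · rintro r' ⟨heq, hcong⟩ hR x y (h : γ x = γ y)
    -- show r' z (γ z) for all z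
    have key : ∀ z : L, r' z (γ z) := by
      intro z
      set m := sSup {w | r' w z} with hm
      have hmz : r' m z := by
        have := hcong {p | r' p.1 z ∧ p.2 = z} (fun p hp => hp.2 ▸ hp.1)
        have h1 : Prod.fst '' {p : L × L | r' p.1 z ∧ p.2 = z} = {w | r' w z} := by
          ext w
          constructor
          · rintro ⟨p, ⟨hp, _⟩, rfl⟩; exact hp
          · intro hw; exact ⟨(w, z), ⟨hw, rfl⟩, rfl⟩
        have h2 : Prod.snd '' {p : L × L | r' p.1 z ∧ p.2 = z} = {z} := by
          ext w
          constructor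
          · rintro ⟨p, ⟨_, hp⟩, rfl⟩; exact hp
          · intro hw
            exact ⟨(z, z), ⟨heq.refl z, rfl⟩, (Set.mem_singleton_iff.mp hw).symm⟩
        rw [h1, h2, sSup_singleton] at this
        exact this
      have hzm : z ≤ m := le_sSup (heq.refl z)
      -- sup of pairs trick: r' (a ⊔ c) (b ⊔ c) whenever r' a b
      have pair : ∀ a b c : L, r' a b → r' (a ⊔ c) (b ⊔ c) := by
        intro a b c hab
        have := hcong {(a, b), (c, c)} (by
          rintro p (rfl | rfl)
          · exact hab
          · exact heq.refl c)
        simpa [Set.image_insert_eq, sSup_insert] using this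
      have hmS : m ∈ S := by
        rw [hmem]
        intro p hp
        have hr : r' p.1 p.2 := hR p hp
        constructor
        · intro h1
          have := pair p.2 p.1 m (heq.symm hr)
          rw [sup_eq_right.2 h1] at this
          have : r' (p.2 ⊔ m) z := heq.trans this hmz
          have hle : p.2 ⊔ m ≤ m := le_sSup this
          exact le_sup_left.trans hle
        · intro h1
          have := pair p.1 p.2 m hr
          rw [sup_eq_right.2 h1] at this
          have : r' (p.1 ⊔ m) z := heq.trans this hmz
          have hle : p.1 ⊔ m ≤ m := le_sSup this
          exact le_sup_left.trans hle
      have hγm : γ z ≤ m := hγle z m hmS hzm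
      -- r' x (m) via pair with γ z
      have := pair z m (γ z) (heq.symm hmz)
      rw [sup_eq_right.2 (hxγ z), sup_eq_left.2 hγm] at this
      exact heq.symm (heq.trans this hmz)
    have hy := key y
    rw [← h] at hy
    exact heq.trans (key x) (heq.symm hy)
end

section
/- For sup-lattices L₁, L₂, L₃, the sup-lattice of homomorphisms Hom(L₁ ⊗ L₂, L₃) is isomorphic to Hom(L₁, Hom(L₂, L₃)). -/
universe u

def IsSupHom {A B : Type*} [CompleteLattice A] [CompleteLattice B] (f : A → B) : Prop :=
  ∀ S : Set A, f (sSup S) = ⨆ x ∈ S, f x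

def IsBimorphism {A B C : Type*} [CompleteLattice A] [CompleteLattice B] [CompleteLattice C]
    (f : A → B → C) : Prop :=
  (∀ (S : Set A) (b : B), f (sSup S) b = ⨆ a ∈ S, f a b) ∧
    ∀ (a : A) (S : Set B), f a (sSup S) = ⨆ b ∈ S, f a b

/-- `(T, τ)` is a tensor product of the sup-lattices `A` and `B`:
`τ` is the universal bimorphism out of `A × B`. -/
def IsSLTensor (A B : Type u) [CompleteLattice A] [CompleteLattice B]
    (T : Type u) [CompleteLattice T] (τ : A → B → T) : Prop :=
  IsBimorphism τ ∧
    ∀ (C : Type u) [CompleteLattice C] (f : A → B → C),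
      IsBimorphism f → ∃! h : T → C, IsSupHom h ∧ ∀ a b, h (τ a b) = f a b

lemma supHom_biSup {A B : Type*} [CompleteLattice A] [CompleteLattice B] {h : A → B}
    (hh : IsSupHom h) {ι : Type*} (S : Set ι) (g : ι → A) :
    h (⨆ i ∈ S, g i) = ⨆ i ∈ S, h (g i) := by
  rw [← sSup_image, hh, iSup_image]

lemma supHom_sup {A B : Type*} [CompleteLattice A] [CompleteLattice B] {h h' : A → B}
    (hh : IsSupHom h) (hh' : IsSupHom h') : IsSupHom (fun a => h a ⊔ h' a) := by
  intro S
  show h (sSup S) ⊔ h' (sSup S) = ⨆ x ∈ S, (h x ⊔ h' x)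
  rw [hh S, hh' S]
  simp only [iSup_sup_eq]

/-- `Hom(L₁ ⊗ L₂, L₃) ≅ Hom(L₁, Hom(L₂, L₃))`, where the sup-lattice
`Hom(L₁, Hom(L₂, L₃))` is identified with the sup-lattice of bimorphisms
`L₁ × L₂ → L₃` with the pointwise order. -/
theorem stmt_7 (L₁ L₂ L₃ : Type u) [CompleteLattice L₁] [CompleteLattice L₂] [CompleteLattice L₃]
    (T : Type u) [CompleteLattice T] (τ : L₁ → L₂ → T) (hT : IsSLTensor L₁ L₂ T τ) :
    Nonempty ({h : T → L₃ // IsSupHom h} ≃o {f : L₁ → L₂ → L₃ // IsBimorphism f}) := by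
  classical
  obtain ⟨hbi, huniv⟩ := hT
  have key : ∀ h : T → L₃, IsSupHom h → IsBimorphism (fun a b => h (τ a b)) := by
    intro h hh
    constructor
    · intro S b
      show h (τ (sSup S) b) = ⨆ a ∈ S, h (τ a b)
      rw [hbi.1 S b, supHom_biSup hh]
    · intro a S
      show h (τ a (sSup S)) = ⨆ b ∈ S, h (τ a b)
      rw [hbi.2 a S, supHom_biSup hh]
  refine ⟨{
    toFun := fun h => ⟨fun a b => h.1 (τ a b), key h.1 h.2⟩
    invFun := fun f => ⟨(huniv L₃ f.1 f.2).exists.choose, (huniv L₃ f.1 f.2).exists.choose_spec.1⟩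
    left_inv := ?_
    right_inv := ?_
    map_rel_iff' := ?_ }⟩
  · intro ⟨h, hh⟩
    have hu := huniv L₃ (fun a b => h (τ a b)) (key h hh)
    have h1 := hu.exists.choose_spec
    simp only [Subtype.mk.injEq]
    exact hu.unique h1 ⟨hh, fun a b => rfl⟩
  · intro ⟨f, hf⟩
    have h1 := (huniv L₃ f hf).exists.choose_spec
    simp only [Subtype.mk.injEq]
    funext a b
    exact h1.2 a b
  · intro ⟨h, hh⟩ ⟨h', hh'⟩
    constructor
    · intro hle
      have hle' : ∀ a b, h (τ a b) ≤ h' (τ a b) := fun a b => hle a b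
      have hu := huniv L₃ (fun a b => h' (τ a b)) (key h' hh')
      have heq : (fun t => h t ⊔ h' t) = h' := by
        refine hu.unique ⟨supHom_sup hh hh', fun a b => ?_⟩ ⟨hh', fun a b => rfl⟩
        exact sup_eq_right.mpr (hle' a b)
      intro t
      calc h t ≤ h t ⊔ h' t := le_sup_left
        _ = h' t := congrFun heq t
    · intro hle a b
      exact hle (τ a b)
end

section
/- For sup-lattices L₁ and L₂: (i) Hom(L₁, L₂) is isomorphic to (L₂^op ⊗ L₁)^op, and (ii) L₁ ⊗ L₂ is isomorphic to Hom(L₁, L₂^op)^op. Consequently the tensor product of sup-lattices is commutative up to isomorphism. -/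
universe u

open OrderDual

section basics
variable {A B C : Type*} [CompleteLattice A] [CompleteLattice B] [CompleteLattice C]

lemma IsSupHom.mono {f : A → B} (hf : IsSupHom f) : Monotone f := by
  intro a b hab
  have h := hf {a, b}
  rw [sSup_pair, sup_eq_right.2 hab] at h
  rw [h]
  exact le_iSup₂_of_le a (Set.mem_insert a {b}) le_rfl

lemma IsSupHom.bot {f : A → B} (hf : IsSupHom f) : f ⊥ = ⊥ := by
  have := hf ∅; simpa using this

lemma isSupHom_id : IsSupHom (fun x : A => x) := fun _ => sSup_eq_iSup

lemma IsSupHom.comp {g : B → C} {f : A → B} (hg : IsSupHom g) (hf : IsSupHom f) :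
    IsSupHom (fun x => g (f x)) := by
  intro S
  have h1 := hg (f '' S)
  rw [sSup_image] at h1
  simp only []
  rw [hf S, h1]
  exact le_antisymm (iSup₂_le fun y ⟨x, hx, hxy⟩ => hxy ▸ le_iSup₂_of_le x hx le_rfl)
    (iSup₂_le fun x hx => le_iSup₂_of_le (f x) ⟨x, hx, rfl⟩ le_rfl)

lemma IsBimorphism.swap {f : A → B → C} (hf : IsBimorphism f) :
    IsBimorphism (fun b a => f a b) := ⟨fun S a => hf.2 a S, fun b S => hf.1 S b⟩

lemma IsBimorphism.mono_right {f : A → B → C} (hf : IsBimorphism f) (a : A) :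
    Monotone (f a) := by
  intro b b' hbb'
  have h := hf.2 a {b, b'}
  rw [sSup_pair, sup_eq_right.2 hbb'] at h
  show f a b ≤ f a b'
  rw [h]
  exact le_iSup₂_of_le b (Set.mem_insert b {b'}) le_rfl

lemma IsBimorphism.mono_left {f : A → B → C} (hf : IsBimorphism f) (b : B) :
    Monotone (fun a => f a b) := by
  intro a a' haa'
  have h := hf.1 {a, a'} b
  rw [sSup_pair, sup_eq_right.2 haa'] at h
  show f a b ≤ f a' b
  rw [h]
  exact le_iSup₂_of_le a (Set.mem_insert a {a'}) le_rfl

lemma IsBimorphism.bot_left {f : A → B → C} (hf : IsBimorphism f) (b : B) : f ⊥ b = ⊥ := by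
  have := hf.1 ∅ b; simpa using this

lemma IsBimorphism.bot_right {f : A → B → C} (hf : IsBimorphism f) (a : A) : f a ⊥ = ⊥ := by
  have := hf.2 a ∅; simpa using this
end basics

def homCL (A B : Type u) [CompleteLattice A] [CompleteLattice B] :
    CompleteLattice {f : A → B // IsSupHom f} :=
  letI : SupSet {f : A → B // IsSupHom f} :=
    ⟨fun S => ⟨fun a => ⨆ f ∈ S, f.1 a, by
      intro T
      refine le_antisymm (iSup₂_le fun f hf => ?_) (iSup₂_le fun x hx => iSup₂_le fun f hf => ?_)
      · rw [f.2 T]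
        exact iSup₂_le fun x hx => le_iSup₂_of_le x hx (le_iSup₂_of_le f hf le_rfl)
      · exact le_iSup₂_of_le f hf (by rw [f.2 T]; exact le_iSup₂_of_le x hx le_rfl)⟩⟩
  completeLatticeOfSup _ (fun S =>
    ⟨fun f hf => Subtype.coe_le_coe.1 (Pi.le_def.2 fun a => le_iSup₂_of_le f hf le_rfl),
     fun g hg => Subtype.coe_le_coe.1 (Pi.le_def.2 fun a =>
       iSup₂_le fun f hf => Pi.le_def.1 (Subtype.coe_le_coe.2 (hg hf)) a)⟩)

open scoped Classical in
lemma isSupHom_eaux {A D : Type*} [CompleteLattice A] [CompleteLattice D] (a : A) (c : D) :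
    IsSupHom (fun x : A => if x = ⊥ then ⊥ else if x ≤ a then c else (⊤ : D)) := by
  intro S
  simp only []
  by_cases hS : ∀ x ∈ S, x = ⊥
  · have hsup : sSup S = ⊥ := by
      rw [sSup_eq_bot]; exact hS
    rw [hsup, if_pos rfl]
    exact le_antisymm bot_le (iSup₂_le fun x hx => by rw [if_pos (hS x hx)])
  · push_neg at hS
    obtain ⟨x₀, hx₀S, hx₀⟩ := hS
    have hsup_ne : sSup S ≠ ⊥ := fun h => hx₀ (le_bot_iff.1 (h ▸ le_sSup hx₀S))
    rw [if_neg hsup_ne]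
    by_cases hle : sSup S ≤ a
    · rw [if_pos hle]
      refine le_antisymm (le_iSup₂_of_le x₀ hx₀S ?_) (iSup₂_le fun x hx => ?_)
      · rw [if_neg hx₀, if_pos ((le_sSup hx₀S).trans hle)]
      · by_cases hxb : x = ⊥
        · rw [if_pos hxb]; exact bot_le
        · rw [if_neg hxb, if_pos ((le_sSup hx).trans hle)]
    · rw [if_neg hle]
      obtain ⟨x₁, hx₁S, hx₁⟩ : ∃ x ∈ S, ¬x ≤ a := by
        by_contra hc; push_neg at hc; exact hle (sSup_le hc)
      have hx₁b : x₁ ≠ ⊥ := fun h => hx₁ (h ▸ bot_le)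
      refine le_antisymm (le_iSup₂_of_le x₁ hx₁S ?_) le_top
      rw [if_neg hx₁b, if_neg hx₁]

open scoped Classical in
noncomputable def eMap {A B : Type u} [CompleteLattice A] [CompleteLattice B] (a : A) (b : B) :
    {f : A → Bᵒᵈ // IsSupHom f} :=
  ⟨fun x => if x = ⊥ then ⊥ else if x ≤ a then toDual b else ⊤, isSupHom_eaux a (toDual b)⟩

section gle
variable {A B : Type u} [CompleteLattice A] [CompleteLattice B]

lemma G_le_iff (f g : {f : A → B // IsSupHom f}) :
    @LE.le _ (homCL A B).toLE f g ↔ ∀ x, f.1 x ≤ g.1 x :=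
  Subtype.coe_le_coe.symm.trans Pi.le_def
end gle

open scoped Classical in
lemma G_tensor (A B : Type u) [CompleteLattice A] [CompleteLattice B] :
    letI := homCL A Bᵒᵈ
    IsSLTensor A B ({f : A → Bᵒᵈ // IsSupHom f})ᵒᵈ (fun a b => toDual (eMap a b)) := by
  letI := homCL A Bᵒᵈ
  have hEval : ∀ (a : A) (b : B) (x : A),
      (eMap a b).1 x = if x = ⊥ then ⊥ else if x ≤ a then toDual b else ⊤ := fun a b x => by
    simp only [eMap]
  -- the bimorphism
  have hbim : IsBimorphism (fun (a : A) (b : B) =>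
      toDual (eMap a b) : A → B → ({f : A → Bᵒᵈ // IsSupHom f})ᵒᵈ) := by
    constructor
    · intro S b
      rw [← sSup_image]
      symm
      apply IsLUB.sSup_eq
      constructor
      · rintro t ⟨a, haS, rfl⟩
        rw [toDual_le_toDual, G_le_iff]
        intro x
        rw [hEval, hEval]
        by_cases hx0 : x = ⊥
        · rw [if_pos hx0, if_pos hx0]
        · rw [if_neg hx0, if_neg hx0]
          by_cases hxa : x ≤ a
          · rw [if_pos hxa, if_pos (hxa.trans (le_sSup haS))]
          · rw [if_neg hxa]; exact le_top
      · intro g hg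
        rw [show g = toDual (ofDual g) from rfl, toDual_le_toDual, G_le_iff]
        intro x
        rw [hEval]
        by_cases hx0 : x = ⊥
        · rw [if_pos hx0, hx0]
          exact le_of_eq (ofDual g).2.bot
        · rw [if_neg hx0]
          by_cases hxs : x ≤ sSup S
          · rw [if_pos hxs]
            have h1 : (ofDual g).1 x ≤ (ofDual g).1 (sSup S) := (ofDual g).2.mono hxs
            refine h1.trans ?_
            rw [(ofDual g).2 S]
            refine iSup₂_le fun a haS => ?_
            have h2 := hg ⟨a, haS, rfl⟩
            rw [toDual_le, G_le_iff] at h2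
            have h3 := h2 a
            rw [hEval] at h3
            by_cases ha0 : a = ⊥
            · rw [if_pos ha0] at h3
              exact le_trans (by rw [ha0]; exact le_of_eq (ofDual g).2.bot) bot_le
            · rwa [if_neg ha0, if_pos le_rfl] at h3
          · rw [if_neg hxs]; exact le_top
    · intro a S
      rw [← sSup_image]
      symm
      apply IsLUB.sSup_eq
      constructor
      · rintro t ⟨b, hbS, rfl⟩
        rw [toDual_le_toDual, G_le_iff]
        intro x
        rw [hEval, hEval]
        by_cases hx0 : x = ⊥
        · rw [if_pos hx0, if_pos hx0]
        · rw [if_neg hx0, if_neg hx0]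
          by_cases hxa : x ≤ a
          · rw [if_pos hxa, if_pos hxa, toDual_le_toDual]
            exact le_sSup hbS
          · rw [if_neg hxa, if_neg hxa]
      · intro g hg
        rw [show g = toDual (ofDual g) from rfl, toDual_le_toDual, G_le_iff]
        intro x
        rw [hEval]
        by_cases hx0 : x = ⊥
        · rw [if_pos hx0, hx0]
          exact le_of_eq (ofDual g).2.bot
        · rw [if_neg hx0]
          by_cases hxa : x ≤ a
          · rw [if_pos hxa]
            rw [show ((ofDual g).1 x ≤ toDual (sSup S)) ↔ sSup S ≤ ofDual ((ofDual g).1 x) from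
              Iff.rfl]
            refine sSup_le fun b hbS => ?_
            have h2 := hg ⟨b, hbS, rfl⟩
            rw [toDual_le, G_le_iff] at h2
            have h3 := h2 x
            rw [hEval, if_neg hx0, if_pos hxa] at h3
            exact h3
          · rw [if_neg hxa]; exact le_top
  refine ⟨hbim, ?_⟩
  intro C _ f hf
  -- key: for c : C, x : A, membership in the "graph"
  have K : ∀ (c : C) (x : A) (b : B), b ≤ sSup {b' | f x b' ≤ c} ↔ f x b ≤ c := by
    intro c x b
    constructor
    · intro hb
      refine le_trans (hf.mono_right x hb) ?_
      rw [hf.2 x {b' | f x b' ≤ c}]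
      exact iSup₂_le fun b' hb' => hb'
    · intro hb
      exact le_sSup hb
  -- the candidate map
  set hmap : ({f : A → Bᵒᵈ // IsSupHom f})ᵒᵈ → C :=
    fun φ => ⨆ a : A, f a (ofDual ((ofDual φ).1 a)) with hmap_def
  have hmono : Monotone hmap := by
    intro φ ψ hφψ
    refine iSup_le fun a => ?_
    refine le_trans ?_ (le_iSup _ a)
    refine hf.mono_right a ?_
    have : ofDual ψ ≤ ofDual φ := hφψ
    have := (Subtype.coe_le_coe.symm.trans Pi.le_def).1 this
    exact this a
  have hval : ∀ (a : A) (b : B), hmap (toDual (eMap a b)) = f a b := by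
    intro a b
    rw [hmap_def]
    simp only []
    refine le_antisymm (iSup_le fun x => ?_) ?_
    · simp only [ofDual_toDual]
      rw [hEval]
      by_cases hx0 : x = ⊥
      · rw [if_pos hx0, hx0, ofDual_bot, hf.bot_left]
        exact bot_le
      · rw [if_neg hx0]
        by_cases hxa : x ≤ a
        · rw [if_pos hxa, ofDual_toDual]
          exact hf.mono_left b hxa
        · rw [if_neg hxa, ofDual_top, hf.bot_right]
          exact bot_le
    · by_cases ha0 : a = ⊥
      · rw [ha0, hf.bot_left]
        exact bot_le
      · refine le_trans ?_ (le_iSup _ a)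
        simp only [ofDual_toDual]
        rw [hEval, if_neg ha0, if_pos le_rfl, ofDual_toDual]
  have hsup : IsSupHom hmap := by
    intro S
    refine le_antisymm ?_ (iSup₂_le fun φ hφ => hmono (le_sSup hφ))
    set c := ⨆ φ ∈ S, hmap φ with hc
    set u : A → B := fun x => sSup {b' | f x b' ≤ c} with hu
    have hKr : ∀ x : A, f x (u x) ≤ c := fun x => (K c x (u x)).1 le_rfl
    have huinf : ∀ T : Set A, u (sSup T) = ⨅ x ∈ T, u x := by
      intro T
      refine le_antisymm (le_iInf₂ fun x hx => ?_) ?_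
      · exact (K c x (u (sSup T))).2
          (le_trans (hf.mono_left (u (sSup T)) (le_sSup hx)) (hKr (sSup T)))
      · refine (K c (sSup T) _).2 ?_
        rw [hf.1 T]
        exact iSup₂_le fun x hx =>
          le_trans (hf.mono_right x (iInf₂_le x hx)) (hKr x)
    have hpsi : IsSupHom (fun x : A => toDual (u x) : A → Bᵒᵈ) := by
      intro T
      show toDual (u (sSup T)) = ⨆ x ∈ T, toDual (u x)
      rw [huinf T, toDual_iInf]
      exact iSup_congr fun x => toDual_iInf _
    have hub : sSup S ≤ toDual (⟨fun x => toDual (u x), hpsi⟩ : {f : A → Bᵒᵈ // IsSupHom f}) := by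
      refine sSup_le fun φ hφ => ?_
      rw [le_toDual, G_le_iff]
      intro x
      show toDual (u x) ≤ (ofDual φ).1 x
      rw [toDual_le]
      refine (K c x (ofDual ((ofDual φ).1 x))).2 ?_
      refine le_trans ?_ (le_iSup₂_of_le φ hφ le_rfl)
      exact le_iSup (fun a => f a (ofDual ((ofDual φ).1 a))) x
    refine le_trans (hmono hub) ?_
    rw [hmap_def]
    exact iSup_le fun a => by simp only [ofDual_toDual]; exact hKr a
  have hgen : ∀ φ : ({f : A → Bᵒᵈ // IsSupHom f})ᵒᵈ,
      sSup (Set.range fun a => toDual (eMap a (ofDual ((ofDual φ).1 a)))) = φ := by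
    intro φ
    apply IsLUB.sSup_eq
    constructor
    · rintro t ⟨a, rfl⟩
      rw [toDual_le, G_le_iff]
      intro x
      rw [hEval]
      by_cases hx0 : x = ⊥
      · rw [if_pos hx0, hx0]
        exact le_of_eq (ofDual φ).2.bot
      · rw [if_neg hx0]
        by_cases hxa : x ≤ a
        · rw [if_pos hxa, toDual_ofDual]
          exact (ofDual φ).2.mono hxa
        · rw [if_neg hxa]
          exact le_top
    · intro g hg
      rw [show φ = toDual (ofDual φ) from rfl, show g = toDual (ofDual g) from rfl,
        toDual_le_toDual, G_le_iff]
      intro x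
      by_cases hx0 : x = ⊥
      · rw [hx0]
        exact le_trans (le_of_eq (ofDual g).2.bot) bot_le
      · have h2 := hg ⟨x, rfl⟩
        rw [toDual_le, G_le_iff] at h2
        have h3 := h2 x
        rw [hEval, if_neg hx0, if_pos le_rfl, toDual_ofDual] at h3
        exact h3
  refine ⟨hmap, ⟨hsup, hval⟩, ?_⟩
  rintro h' ⟨h'sup, h'val⟩
  funext φ
  have h1 := h'sup (Set.range fun a => toDual (eMap a (ofDual ((ofDual φ).1 a))))
  rw [hgen φ] at h1
  rw [h1, iSup_range]
  simp only [h'val]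
  rfl

lemma tensor_swap {A B T : Type u} [CompleteLattice A] [CompleteLattice B] [CompleteLattice T]
    {τ : A → B → T} (h : IsSLTensor A B T τ) : IsSLTensor B A T (fun b a => τ a b) := by
  refine ⟨h.1.swap, fun C _ f hf => ?_⟩
  obtain ⟨k, ⟨hk1, hk2⟩, hk3⟩ := h.2 C (fun a b => f b a) hf.swap
  exact ⟨k, ⟨hk1, fun b a => hk2 a b⟩, fun k' ⟨hk1', hk2'⟩ => hk3 k' ⟨hk1', fun a b => hk2' b a⟩⟩

lemma tensor_unique {A B T T' : Type u} [CompleteLattice A] [CompleteLattice B]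
    [CompleteLattice T] [CompleteLattice T'] {τ : A → B → T} {τ' : A → B → T'}
    (h1 : IsSLTensor A B T τ) (h2 : IsSLTensor A B T' τ') : Nonempty (T ≃o T') := by
  obtain ⟨h, ⟨hh1, hh2⟩, -⟩ := h1.2 T' τ' h2.1
  obtain ⟨k, ⟨hk1, hk2⟩, -⟩ := h2.2 T τ h1.1
  obtain ⟨u, -, hu⟩ := h1.2 T τ h1.1
  obtain ⟨v, -, hv⟩ := h2.2 T' τ' h2.1
  have hkh : ∀ t, k (h t) = t := by
    have e1 : (fun t => k (h t)) = u := hu _ ⟨hk1.comp hh1, fun a b => by beta_reduce; rw [hh2, hk2]⟩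
    have e2 : (fun t : T => t) = u := hu _ ⟨isSupHom_id, fun _ _ => rfl⟩
    intro t
    calc k (h t) = u t := congrFun e1 t
    _ = t := (congrFun e2 t).symm
  have hhk : ∀ t, h (k t) = t := by
    have e1 : (fun t => h (k t)) = v := hv _ ⟨hh1.comp hk1, fun a b => by beta_reduce; rw [hk2, hh2]⟩
    have e2 : (fun t : T' => t) = v := hv _ ⟨isSupHom_id, fun _ _ => rfl⟩
    intro t
    calc h (k t) = v t := congrFun e1 t
    _ = t := (congrFun e2 t).symm
  exact ⟨⟨⟨h, k, hkh, hhk⟩, fun {a b} => ⟨fun hle => by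
    have := hk1.mono hle
    simpa only [Equiv.coe_fn_mk, hkh] using this, fun hle => hh1.mono hle⟩⟩⟩

/-- (i) `Hom(L₁, L₂) ≅ (L₂ᵒᵖ ⊗ L₁)ᵒᵖ`; (ii) `L₁ ⊗ L₂ ≅ Hom(L₁, L₂ᵒᵖ)ᵒᵖ`;
consequently the tensor product is commutative up to isomorphism. -/
theorem stmt_8 (L₁ L₂ : Type u) [CompleteLattice L₁] [CompleteLattice L₂]
    (T₁ : Type u) [CompleteLattice T₁] (τ₁ : L₂ᵒᵈ → L₁ → T₁) (hT₁ : IsSLTensor L₂ᵒᵈ L₁ T₁ τ₁)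
    (T₂ : Type u) [CompleteLattice T₂] (τ₂ : L₁ → L₂ → T₂) (hT₂ : IsSLTensor L₁ L₂ T₂ τ₂)
    (T₃ : Type u) [CompleteLattice T₃] (τ₃ : L₂ → L₁ → T₃) (hT₃ : IsSLTensor L₂ L₁ T₃ τ₃) :
    Nonempty ({f : L₁ → L₂ // IsSupHom f} ≃o T₁ᵒᵈ) ∧
      Nonempty (T₂ ≃o ({f : L₁ → L₂ᵒᵈ // IsSupHom f})ᵒᵈ) ∧
      Nonempty (T₂ ≃o T₃) := by
  letI iG2 := homCL L₁ L₂ᵒᵈ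
  letI iG1 := homCL L₁ (L₂ᵒᵈ)ᵒᵈ
  have t2 : Nonempty (T₂ ≃o ({f : L₁ → L₂ᵒᵈ // IsSupHom f})ᵒᵈ) :=
    tensor_unique hT₂ (G_tensor L₁ L₂)
  have t1' : Nonempty (T₁ ≃o ({f : L₁ → (L₂ᵒᵈ)ᵒᵈ // IsSupHom f})ᵒᵈ) :=
    tensor_unique (tensor_swap hT₁) (G_tensor L₁ L₂ᵒᵈ)
  have t3 : Nonempty (T₂ ≃o T₃) := tensor_unique hT₂ (tensor_swap hT₃)
  refine ⟨?_, t2, t3⟩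
  obtain ⟨e⟩ := t1'
  have ι : {f : L₁ → L₂ // IsSupHom f} ≃o {f : L₁ → (L₂ᵒᵈ)ᵒᵈ // IsSupHom f} :=
    ⟨⟨fun f => ⟨f.1, f.2⟩, fun f => ⟨f.1, f.2⟩, fun f => rfl, fun f => rfl⟩, Iff.rfl⟩
  exact ⟨ι.trans ((OrderIso.dualDual _).trans e.dual.symm)⟩
end

section
/- Let M be a Q-module and γ a closure operator on M. Then γ is structural (q ⋆ γ(m) ≤ γ(q ⋆ m)) if and only if γ(q ⋆ γ(m)) = γ(q ⋆ m) for all q, m, if and only if γ(m) /⋆ n = γ(m) /⋆ γ(n) for all m, n, if and only if γ(q \⋆ m) ≤ q \⋆ γ(m) for all q, m, if and only if q \⋆ γ(m) is γ-closed for all q, m. -/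
universe u v w

/-- A (unital) quantale: a sup-lattice with a monoid multiplication distributing
over arbitrary joins on both sides. -/
class Quantale' (Q : Type u) extends CompleteLattice Q, Monoid Q where
  mul_sSup : ∀ (a : Q) (s : Set Q), a * SupSet.sSup s = ⨆ b ∈ s, a * b
  sSup_mul : ∀ (s : Set Q) (a : Q), SupSet.sSup s * a = ⨆ b ∈ s, b * a

/-- A left module over a quantale `Q`: a sup-lattice with an action of `Q`
distributing over arbitrary joins in both arguments and compatible with the
monoid structure of `Q`. -/
class QModule (Q : Type u) [Quantale' Q] (M : Type v) [CompleteLattice M] extends SMul Q M where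
  mul_smul' : ∀ (a b : Q) (m : M), (a * b) • m = a • b • m
  smul_sSup : ∀ (a : Q) (s : Set M), a • sSup s = ⨆ m ∈ s, a • m
  sSup_smul : ∀ (s : Set Q) (m : M), (sSup s : Q) • m = ⨆ a ∈ s, a • m
  one_smul' : ∀ m : M, (1 : Q) • m = m

/-- The residual `q \⋆ m = ⋁ {n | q ⋆ n ≤ m}`. -/
def lres {Q : Type u} [Quantale' Q] {M : Type v} [CompleteLattice M] [QModule Q M]
    (q : Q) (m : M) : M :=
  sSup {n : M | q • n ≤ m}

/-- The residual `m /⋆ n = ⋁ {q | q ⋆ n ≤ m}`. -/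
def rres {Q : Type u} [Quantale' Q] {M : Type v} [CompleteLattice M] [QModule Q M]
    (m n : M) : Q :=
  sSup {q : Q | q • n ≤ m}

/-- The left residual `q \ r = ⋁ {s | q · s ≤ r}` of the quantale multiplication. -/
def qlres {Q : Type u} [Quantale' Q] (q r : Q) : Q :=
  sSup {s : Q | q * s ≤ r}


section Aux
variable {Q : Type u} [Quantale' Q] {M : Type v} [CompleteLattice M] [QModule Q M]

lemma qm_smul_mono_right (q : Q) {n n' : M} (h : n ≤ n') : q • n ≤ q • n' := by
  have : q • sSup {n, n'} = ⨆ m ∈ ({n, n'} : Set M), q • m := QModule.smul_sSup q _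
  have h2 : sSup ({n, n'} : Set M) = n' := by
    rw [sSup_insert, sSup_singleton, sup_eq_right.mpr h]
  rw [h2] at this
  rw [this]
  exact le_biSup _ (Set.mem_insert n {n'})

lemma smul_sSup_le {q : Q} {s : Set M} {m : M} (h : ∀ n ∈ s, q • n ≤ m) :
    q • sSup s ≤ m := by
  rw [QModule.smul_sSup]
  exact iSup₂_le h

lemma sSup_smul_le {s : Set Q} {n m : M} (h : ∀ q ∈ s, q • n ≤ m) :
    (sSup s : Q) • n ≤ m := by
  rw [QModule.sSup_smul]
  exact iSup₂_le h

lemma smul_lres_le (q : Q) (m : M) : q • lres q m ≤ m :=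
  smul_sSup_le fun _ hn => hn

lemma le_lres_iff {q : Q} {n m : M} : n ≤ lres q m ↔ q • n ≤ m :=
  ⟨fun h => le_trans (qm_smul_mono_right q h) (smul_lres_le q m),
   fun h => le_sSup h⟩

lemma rres_smul_le (m n : M) : (rres (Q := Q) m n) • n ≤ m :=
  sSup_smul_le fun _ hq => hq

lemma qm_smul_mono_left {q q' : Q} (h : q ≤ q') (n : M) : q • n ≤ q' • n := by
  have h2 : sSup ({q, q'} : Set Q) = q' := by
    rw [sSup_insert, sSup_singleton, sup_eq_right.mpr h]
  have := QModule.sSup_smul (Q := Q) (M := M) ({q, q'} : Set Q) n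
  rw [h2] at this
  rw [this]
  exact le_biSup (fun a : Q => a • n) (Set.mem_insert q {q'})

lemma le_rres_iff {q : Q} {n m : M} : q ≤ rres m n ↔ q • n ≤ m :=
  ⟨fun h => le_trans (qm_smul_mono_left h n) (rres_smul_le m n),
   fun h => le_sSup (show q ∈ {q : Q | q • n ≤ m} from h)⟩

end Aux

theorem stmt_15 {Q : Type u} [Quantale' Q] {M : Type v} [CompleteLattice M] [QModule Q M]
    (γ : M → M) (hmono : Monotone γ) (hext : ∀ m, m ≤ γ m) (hidem : ∀ m, γ (γ m) = γ m) :
    List.TFAE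
      [∀ (q : Q) (m : M), q • γ m ≤ γ (q • m),
        ∀ (q : Q) (m : M), γ (q • γ m) = γ (q • m),
        ∀ m n : M, rres (Q := Q) (γ m) n = rres (Q := Q) (γ m) (γ n),
        ∀ (q : Q) (m : M), γ (lres q m) ≤ lres q (γ m),
        ∀ (q : Q) (m : M), γ (lres q (γ m)) = lres q (γ m)] := by
  tfae_have 1 → 2 := by
    intro h1 q m
    refine le_antisymm ?_ (hmono (qm_smul_mono_right q (hext m)))
    have := hmono (h1 q m)
    rwa [hidem] at this
  tfae_have 2 → 3 := by
    intro h2 m n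
    unfold rres
    congr 1
    ext q
    simp only [Set.mem_setOf_eq]
    constructor
    · intro h
      calc q • γ n ≤ γ (q • γ n) := hext _
        _ = γ (q • n) := h2 q n
        _ ≤ γ (γ m) := hmono h
        _ = γ m := hidem m
    · intro h
      exact le_trans (qm_smul_mono_right q (hext n)) h
  tfae_have 3 → 1 := by
    intro h3 q m
    have : q ≤ rres (Q := Q) (γ (q • m)) (γ m) := by
      rw [← h3]
      exact le_rres_iff.mpr (hext _)
    exact le_rres_iff.mp this
  tfae_have 1 → 4 := by
    intro h1 q m
    rw [le_lres_iff]
    exact le_trans (h1 q (lres q m)) (hmono (smul_lres_le q m))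
  tfae_have 4 → 5 := by
    intro h4 q m
    refine le_antisymm ?_ (hext _)
    have := h4 q (γ m)
    rwa [hidem] at this
  tfae_have 5 → 1 := by
    intro h5 q m
    rw [← le_lres_iff (q := q)]
    have hm : m ≤ lres q (γ (q • m)) := le_lres_iff.mpr (hext _)
    calc γ m ≤ γ (lres q (γ (q • m))) := hmono hm
      _ = lres q (γ (q • m)) := h5 q (q • m)
  tfae_finish
end

section
/- If f: M → N is a Q-module homomorphism, then f_* ∘ f is a structural closure operator (nucleus) on M. Conversely, for any nucleus γ on a Q-module M, the image M_γ carries a Q-module structure (join γ ∘ ⋁, action γ ∘ ⋆, bottom γ(⊥)) and the map m ↦ γ(m) is a Q-module homomorphism f_γ: M → M_γ with (f_γ)_* ∘ f_γ = γ. -/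
universe u v w

theorem stmt_16 {Q : Type u} [Quantale' Q] {M : Type v} {N : Type w}
    [CompleteLattice M] [CompleteLattice N] [QModule Q M] [QModule Q N]
    (f : M → N) (g : N → M)
    (hsup : ∀ S : Set M, f (sSup S) = ⨆ x ∈ S, f x)
    (hsmul : ∀ (q : Q) (m : M), f (q • m) = q • f m)
    (adj : ∀ (x : M) (y : N), f x ≤ y ↔ x ≤ g y) :
    (Monotone (g ∘ f) ∧ (∀ m : M, m ≤ g (f m)) ∧ (∀ m : M, g (f (g (f m))) = g (f m)) ∧
        ∀ (q : Q) (m : M), q • g (f m) ≤ g (f (q • m))) ∧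
      ∀ γ : M → M, Monotone γ → (∀ m, m ≤ γ m) → (∀ m, γ (γ m) = γ m) →
        (∀ (q : Q) (m : M), q • γ m ≤ γ (q • m)) →
        ∃ fγ : M → {m : M // γ m = m},
          (∀ m : M, (fγ m : M) = γ m) ∧
            Function.Surjective fγ ∧
            (∀ S : Set M, IsLUB (fγ '' S) (fγ (sSup S))) ∧
            (∀ (q : Q) (m : M), γ (q • γ m) = γ (q • m)) ∧
            ∀ (m : M) (x : {m : M // γ m = m}), fγ m ≤ x ↔ m ≤ (x : M) := by
  -- smul is monotone in the second argument
  have smul_mono : ∀ (q : Q) (a b : M), a ≤ b → q • a ≤ q • b := by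
    intro q a b hab
    have h := QModule.smul_sSup q ({a, b} : Set M)
    have hb : sSup ({a, b} : Set M) = b := by
      simp [sSup_insert, sup_eq_right.mpr hab]
    rw [hb] at h
    rw [h]
    exact le_iSup₂_of_le a (by simp) le_rfl
  have fmono : Monotone f := by
    intro a b hab
    exact (adj a (f b)).mpr (le_trans hab ((adj b (f b)).mp le_rfl))
  have unit : ∀ m : M, m ≤ g (f m) := fun m => (adj m (f m)).mp le_rfl
  have counit : ∀ y : N, f (g y) ≤ y := fun y => (adj (g y) y).mpr le_rfl
  have gmono : Monotone g := by
    intro a b hab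
    exact (adj _ _).mp (le_trans (counit a) hab)
  have gfmono : Monotone (g ∘ f) := by
    intro a b hab
    exact gmono (fmono hab)
  constructor
  · refine ⟨gfmono, unit, ?_, ?_⟩
    · intro m
      apply le_antisymm
      · exact gmono (counit (f m))
      · exact unit _
    · intro q m
      apply (adj _ _).mp
      rw [hsmul, hsmul]
      have smul_monoN : ∀ (q : Q) (a b : N), a ≤ b → q • a ≤ q • b := by
        intro q a b hab
        have h := QModule.smul_sSup (M := N) q ({a, b} : Set N)
        have hb : sSup ({a, b} : Set N) = b := by
          simp [sSup_insert, sup_eq_right.mpr hab]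
        rw [hb] at h
        rw [h]
        exact le_iSup₂_of_le a (by simp) le_rfl
      exact smul_monoN q _ _ (counit (f m))
  · intro γ hmono hle hidem hnuc
    refine ⟨fun m => ⟨γ m, hidem m⟩, fun m => rfl, ?_, ?_, ?_, ?_⟩
    · intro ⟨x, hx⟩
      exact ⟨x, Subtype.ext hx⟩
    · intro S
      constructor
      · rintro _ ⟨m, hm, rfl⟩
        exact Subtype.mk_le_mk.mpr (hmono (le_sSup hm))
      · rintro ⟨b, hb⟩ hub
        have : sSup S ≤ b := by
          apply sSup_le
          intro m hm
          exact le_trans (hle m) (hub ⟨m, hm, rfl⟩)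
        exact Subtype.mk_le_mk.mpr (le_trans (hmono this) (le_of_eq hb))
    · intro q m
      apply le_antisymm
      · calc γ (q • γ m) ≤ γ (γ (q • m)) := hmono (hnuc q m)
          _ = γ (q • m) := hidem _
      · exact hmono (smul_mono q _ _ (hle m))
    · intro m ⟨x, hx⟩
      constructor
      · intro h
        exact le_trans (hle m) (Subtype.mk_le_mk.mp h)
      · intro h
        exact Subtype.mk_le_mk.mpr (le_trans (hmono h) (le_of_eq hx))
end

section
/- For a quantale Q and nonempty sets X, Y, the sup-lattice of Q-module homomorphisms Hom_Q(Q^X, Q^Y) is isomorphic to Q^{X×Y}, via the map sending a kernel p ∈ Q^{X×Y} to the transform H_p defined by H_p(f)(y) = ⋁_{x∈X} f(x)·p(x,y). -/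
universe u v w

/-- A `Q`-module homomorphism between the free modules `Q^X` and `Q^Y`
(with pointwise joins and pointwise scalar action `(q • f) x = q * f x`). -/
def IsFreeModHom {Q : Type u} [Quantale' Q] {X Y : Type v}
    (h : (X → Q) → (Y → Q)) : Prop :=
  (∀ S : Set (X → Q), h (sSup S) = ⨆ f ∈ S, h f) ∧
    ∀ (q : Q) (f : X → Q), h (fun x => q * f x) = fun y => q * h f y


section StmtAux
variable {Q : Type u} [Quantale' Q]

lemma q_mul_iSup {ι : Sort w} (a : Q) (f : ι → Q) : a * ⨆ i, f i = ⨆ i, a * f i := by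
  rw [show (⨆ i, f i) = sSup (Set.range f) from (sSup_range).symm, Quantale'.mul_sSup, iSup_range]

lemma q_iSup_mul {ι : Sort w} (f : ι → Q) (a : Q) : (⨆ i, f i) * a = ⨆ i, f i * a := by
  rw [show (⨆ i, f i) = sSup (Set.range f) from (sSup_range).symm, Quantale'.sSup_mul, iSup_range]

lemma q_bot_mul (a : Q) : (⊥ : Q) * a = ⊥ := by
  have := Quantale'.sSup_mul (∅ : Set Q) a
  simpa using this

lemma q_mul_mono (c : Q) {a b : Q} (h : a ≤ b) : c * a ≤ c * b := by
  have key : c * (a ⊔ b) = c * a ⊔ c * b := by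
    have h2 := Quantale'.mul_sSup c {a, b}
    rw [sSup_insert, sSup_singleton] at h2
    rw [h2, iSup_insert, iSup_singleton]
  rw [sup_eq_right.2 h] at key
  rw [key]; exact le_sup_left

variable {X Y : Type v}

open scoped Classical

lemma q_mul_bot (a : Q) : a * (⊥ : Q) = ⊥ := by
  have := Quantale'.mul_sSup a (∅ : Set Q)
  simpa using this

/-- The delta function. -/
noncomputable def qdelta (x : X) : X → Q := fun x' => if x' = x then 1 else ⊥

lemma qdelta_sum (f : X → Q) (x' : X) : (⨆ x, f x * qdelta (Q := Q) x x') = f x' := by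
  apply le_antisymm
  · refine iSup_le fun x => ?_
    rcases eq_or_ne x' x with h | h
    · subst h; simp [qdelta]
    · simp [qdelta, h, q_mul_bot]
  · have := le_iSup (fun x => f x * qdelta (Q := Q) x x') x'
    simpa [qdelta] using this

noncomputable def Hmap (p : X × Y → Q) : (X → Q) → (Y → Q) := fun f y => ⨆ x, f x * p (x, y)

lemma Hmap_hom (p : X × Y → Q) : IsFreeModHom (Hmap p) := by
  constructor
  · intro S
    funext y
    simp only [Hmap, iSup_apply, sSup_apply]
    rw [iSup_subtype']
    rw [show (⨆ x, (⨆ f : S, (f : X → Q) x) * p (x, y))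
        = ⨆ x, ⨆ f : S, (f : X → Q) x * p (x, y) by
      congr 1; funext x; rw [q_iSup_mul]]
    exact iSup_comm
  · intro q f
    funext y
    simp only [Hmap, q_mul_iSup, mul_assoc]

lemma Hmap_delta (p : X × Y → Q) (x : X) (y : Y) : Hmap p (qdelta x) y = p (x, y) := by
  simp only [Hmap]
  apply le_antisymm
  · refine iSup_le fun x' => ?_
    rcases eq_or_ne x' x with h | h
    · subst h; simp [qdelta]
    · simp [qdelta, h, q_bot_mul]
  · calc p (x, y) = qdelta (Q := Q) x x * p (x, y) := by simp [qdelta]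
      _ ≤ _ := le_iSup (fun x' => qdelta (Q := Q) x x' * p (x', y)) x

lemma hom_eq_Hmap {h : (X → Q) → (Y → Q)} (hh : IsFreeModHom h) (f : X → Q) (y : Y) :
    h f y = ⨆ x, f x * h (qdelta x) y := by
  obtain ⟨hj, hs⟩ := hh
  have hf : f = sSup (Set.range (fun x x' => f x * qdelta (Q := Q) x x')) := by
    funext x'
    rw [sSup_apply, iSup_range' (fun h : X → Q => h x') (fun x x' => f x * qdelta (Q := Q) x x')]
    exact (qdelta_sum f x').symm
  conv_lhs => rw [hf, hj]
  rw [iSup_range, iSup_apply]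
  congr 1
  funext x
  have := hs (f x) (qdelta x)
  rw [this]

end StmtAux

/-- The sup-lattice of `Q`-module homomorphisms `Hom_Q(Q^X, Q^Y)` is isomorphic to
`Q^{X×Y}`, via the map sending a kernel `p` to the transform
`H_p f y = ⋁_x f x * p (x, y)`. -/
theorem stmt_17 {Q : Type u} [Quantale' Q] (X Y : Type v) [Nonempty X] [Nonempty Y] :
    ∃ e : (X × Y → Q) ≃o {h : (X → Q) → (Y → Q) // IsFreeModHom h},
      ∀ (p : X × Y → Q) (f : X → Q) (y : Y),
        (e p : (X → Q) → (Y → Q)) f y = ⨆ x : X, f x * p (x, y) := by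
  refine ⟨{ toFun := fun p => ⟨Hmap p, Hmap_hom p⟩
            invFun := fun h => fun xy => (h : (X → Q) → (Y → Q)) (qdelta xy.1) xy.2
            left_inv := fun p => by
              funext xy
              exact Hmap_delta p xy.1 xy.2
            right_inv := fun h => by
              apply Subtype.ext
              funext f y
              exact (hom_eq_Hmap h.2 f y).symm
            map_rel_iff' := ?_ }, fun p f y => rfl⟩
  intro p q
  simp only [Equiv.coe_fn_mk, Subtype.mk_le_mk]
  constructor
  · intro h xy
    have h2 := h (qdelta xy.1) xy.2
    rwa [Hmap_delta, Hmap_delta] at h2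
  · intro h f y
    exact iSup_mono fun x => q_mul_mono (f x) (h (x, y))
end

section
/- For any quantale Q, the categories of left Q-modules and right Q-modules have the strong amalgamation property: given Q-modules M, N, P and injective homomorphisms f: P → M, g: P → N, there exist a Q-module R and injective homomorphisms f': M → R, g': N → R with f' ∘ f = g' ∘ g and f'[M] ∩ g'[N] = (f' ∘ f)[P]. -/
universe u v w

/-- A homomorphism of `Q`-modules: a map preserving arbitrary joins and the scalar action. -/
def IsQModHom (Q : Type u) [Quantale' Q] {A : Type v} {B : Type w}
    [CompleteLattice A] [CompleteLattice B] [QModule Q A] [QModule Q B] (f : A → B) : Prop :=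
  (∀ S : Set A, f (sSup S) = ⨆ x ∈ S, f x) ∧ ∀ (q : Q) (x : A), f (q • x) = q • f x

section Helpers
variable {Q : Type u} [Quantale' Q]

theorem qsmul_mono {A : Type v} [CompleteLattice A] [QModule Q A] (q : Q) {x y : A}
    (h : x ≤ y) : q • x ≤ q • y := by
  have h1 : q • y = ⨆ m ∈ ({x, y} : Set A), q • m := by
    rw [← QModule.smul_sSup, sSup_pair, sup_eq_right.mpr h]
  rw [h1]
  exact le_iSup₂ (f := fun m (_ : m ∈ ({x, y} : Set A)) => q • m) x (by simp)

theorem qsmul_le_iff {A : Type v} [CompleteLattice A] [QModule Q A] (q : Q) (x m : A) :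
    q • x ≤ m ↔ x ≤ lres q m := by
  constructor
  · exact fun h => le_sSup h
  · intro h
    refine le_trans (qsmul_mono q h) ?_
    rw [lres, QModule.smul_sSup]
    exact iSup₂_le fun n hn => hn

theorem qsmul_bot {A : Type v} [CompleteLattice A] [QModule Q A] (q : Q) :
    q • (⊥ : A) = ⊥ := by
  have := QModule.smul_sSup (M := A) q ∅
  simpa using this

section Hom
variable {A : Type v} {B : Type w} [CompleteLattice A] [CompleteLattice B]
  [QModule Q A] [QModule Q B] {f : A → B}

theorem hom_mono (hf : IsQModHom Q f) {x y : A} (h : x ≤ y) : f x ≤ f y := by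
  have h1 : f y = ⨆ z ∈ ({x, y} : Set A), f z := by
    rw [← hf.1, sSup_pair, sup_eq_right.mpr h]
  rw [h1]
  exact le_iSup₂ (f := fun z (_ : z ∈ ({x, y} : Set A)) => f z) x (by simp)

theorem hom_le_iff (hf : IsQModHom Q f) (hfi : Function.Injective f) {x y : A} :
    f x ≤ f y ↔ x ≤ y := by
  refine ⟨fun h => ?_, fun h => hom_mono hf h⟩
  have h1 : f (x ⊔ y) = f x ⊔ f y := by
    rw [← sSup_pair, hf.1, iSup_pair]
  have h2 : f (x ⊔ y) = f y := by rw [h1, sup_eq_right.mpr h]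
  exact sup_eq_right.mp (hfi h2)

end Hom
end Helpers

set_option linter.unusedSectionVars false
section Amalg
variable {Q : Type u} [Quantale' Q] {M N P : Type u}
  [CompleteLattice M] [CompleteLattice N] [CompleteLattice P]
  [QModule Q M] [QModule Q N] [QModule Q P]

instance prodQModule : QModule Q (M × N) where
  mul_smul' a b m := by
    apply Prod.ext <;> simp [Prod.smul_def, QModule.mul_smul']
  one_smul' m := by
    apply Prod.ext <;> simp [Prod.smul_def, QModule.one_smul']
  smul_sSup a s := by
    apply Prod.ext
    · show a • (sSup s).1 = (⨆ m ∈ s, a • m).1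
      rw [Prod.fst_sSup, QModule.smul_sSup, iSup_image]
      simp [Prod.fst_iSup]
    · show a • (sSup s).2 = (⨆ m ∈ s, a • m).2
      rw [Prod.snd_sSup, QModule.smul_sSup, iSup_image]
      simp [Prod.snd_iSup]
  sSup_smul s m := by
    apply Prod.ext <;>
      simp [Prod.smul_def, Prod.fst_iSup, Prod.snd_iSup, QModule.sSup_smul]

def amalgC (f : P → M) (g : P → N) : Set (M × N) :=
  {c | ∀ p : P, f p ≤ c.1 ↔ g p ≤ c.2}

variable (f : P → M) (g : P → N)

theorem amalgC_sInf {S : Set (M × N)} (hS : S ⊆ amalgC f g) : sInf S ∈ amalgC f g := by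
  intro p
  simp only [Prod.fst_sInf, Prod.snd_sInf, le_sInf_iff, Set.forall_mem_image]
  exact ⟨fun h c hc => (hS hc p).1 (h hc), fun h c hc => (hS hc p).2 (h hc)⟩

theorem amalgC_lres (hf : IsQModHom Q f) (hg : IsQModHom Q g) (q : Q) {c : M × N}
    (hc : c ∈ amalgC f g) : (lres q c.1, lres q c.2) ∈ amalgC f g := by
  intro p
  show f p ≤ lres q c.1 ↔ g p ≤ lres q c.2
  rw [← qsmul_le_iff, ← qsmul_le_iff, ← hf.2, ← hg.2]
  exact hc (q • p)

def amalgCl (x : M × N) : M × N := sInf {c | c ∈ amalgC f g ∧ x ≤ c}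

theorem amalgCl_mem (x : M × N) : amalgCl f g x ∈ amalgC f g :=
  amalgC_sInf f g fun _ hc => hc.1

theorem le_amalgCl (x : M × N) : x ≤ amalgCl f g x := le_sInf fun _ hc => hc.2

theorem amalgCl_le {x c : M × N} (hc : c ∈ amalgC f g) (h : x ≤ c) : amalgCl f g x ≤ c :=
  sInf_le ⟨hc, h⟩

theorem amalgCl_mono {x y : M × N} (h : x ≤ y) : amalgCl f g x ≤ amalgCl f g y :=
  amalgCl_le f g (amalgCl_mem f g y) (h.trans (le_amalgCl f g y))

theorem amalgCl_eq {c : M × N} (hc : c ∈ amalgC f g) : amalgCl f g c = c :=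
  le_antisymm (amalgCl_le f g hc le_rfl) (le_amalgCl f g c)

theorem amalgCl_smul (hf : IsQModHom Q f) (hg : IsQModHom Q g) (q : Q) (x : M × N) :
    amalgCl f g (q • amalgCl f g x) = amalgCl f g (q • x) := by
  apply le_antisymm
  · set d := amalgCl f g (q • x) with hd
    have hy : (lres q d.1, lres q d.2) ∈ amalgC f g := amalgC_lres f g hf hg q (amalgCl_mem f g _)
    have hx : x ≤ (lres q d.1, lres q d.2) := by
      have h0 : q • x ≤ d := le_amalgCl f g _
      exact Prod.le_def.mpr ⟨(qsmul_le_iff q x.1 d.1).mp h0.1, (qsmul_le_iff q x.2 d.2).mp h0.2⟩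
    have h2 := amalgCl_le f g hy hx
    refine amalgCl_le f g (amalgCl_mem f g _) (Prod.le_def.mpr ⟨?_, ?_⟩)
    · exact (qsmul_le_iff q _ _).mpr h2.1
    · exact (qsmul_le_iff q _ _).mpr h2.2
  · exact amalgCl_mono f g (qsmul_mono q (le_amalgCl f g x))

theorem amalgCl_biSup {ι : Type*} (s : Set ι) (k : ι → M × N) :
    amalgCl f g (⨆ i ∈ s, amalgCl f g (k i)) = amalgCl f g (⨆ i ∈ s, k i) := by
  apply le_antisymm
  · refine amalgCl_le f g (amalgCl_mem f g _) (iSup₂_le fun i hi => ?_)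
    exact amalgCl_mono f g (le_iSup₂ (f := fun i (_ : i ∈ s) => k i) i hi)
  · refine amalgCl_mono f g (iSup₂_mono fun i hi => le_amalgCl f g (k i))

theorem amalgCl_mk_bot (hf : IsQModHom Q f) (hg : IsQModHom Q g)
    (hgi : Function.Injective g) (m : M) :
    amalgCl f g (m, ⊥) = (m, g (sSup {p | f p ≤ m})) := by
  have hmem : (m, g (sSup {p | f p ≤ m})) ∈ amalgC f g := by
    intro p
    show f p ≤ m ↔ g p ≤ g (sSup {p | f p ≤ m})
    rw [hom_le_iff hg hgi]
    constructor
    · exact fun h => le_sSup h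
    · intro h
      refine (hom_mono hf h).trans ?_
      rw [hf.1]
      exact iSup₂_le fun p' hp' => hp'
  apply le_antisymm
  · exact amalgCl_le f g hmem (Prod.le_def.mpr ⟨le_rfl, bot_le⟩)
  · have h1 : ((m, (⊥ : N)) : M × N) ≤ amalgCl f g (m, ⊥) := le_amalgCl f g _
    refine Prod.le_def.mpr ⟨h1.1, ?_⟩
    rw [hg.1]
    exact iSup₂_le fun p hp => (amalgCl_mem f g (m, ⊥) p).1 (le_trans hp h1.1)

theorem amalgCl_bot_mk (hf : IsQModHom Q f) (hg : IsQModHom Q g)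
    (hfi : Function.Injective f) (n : N) :
    amalgCl f g (⊥, n) = (f (sSup {p | g p ≤ n}), n) := by
  have hmem : (f (sSup {p | g p ≤ n}), n) ∈ amalgC f g := by
    intro p
    show f p ≤ f (sSup {p | g p ≤ n}) ↔ g p ≤ n
    rw [hom_le_iff hf hfi]
    constructor
    · intro h
      refine (hom_mono hg h).trans ?_
      rw [hg.1]
      exact iSup₂_le fun p' hp' => hp'
    · exact fun h => le_sSup h
  apply le_antisymm
  · exact amalgCl_le f g hmem (Prod.le_def.mpr ⟨bot_le, le_rfl⟩)
  · have h1 : (((⊥ : M), n) : M × N) ≤ amalgCl f g (⊥, n) := le_amalgCl f g _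
    refine Prod.le_def.mpr ⟨?_, h1.2⟩
    rw [hf.1]
    exact iSup₂_le fun p hp => (amalgCl_mem f g (⊥, n) p).2 (le_trans hp h1.2)

theorem sSup_le_self {α : Type*} [CompleteLattice α] (p : α) : sSup {p' | p' ≤ p} = p :=
  le_antisymm (sSup_le fun _ h => h) (le_sSup le_rfl)

end Amalg

set_option maxHeartbeats 1000000 in
/-- Strong amalgamation property for the category of `Q`-modules: an amalgam
`(P, f, M, g, N)` of injective homomorphisms can be completed by injective
homomorphisms `f' : M → R`, `g' : N → R` with `f' ∘ f = g' ∘ g` and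
`f'[M] ∩ g'[N] = (f' ∘ f)[P]`. -/
theorem stmt_19 {Q : Type u} [Quantale' Q] (M N P : Type u)
    [CompleteLattice M] [CompleteLattice N] [CompleteLattice P]
    [QModule Q M] [QModule Q N] [QModule Q P]
    (f : P → M) (g : P → N)
    (hf : IsQModHom Q f) (hg : IsQModHom Q g)
    (hfi : Function.Injective f) (hgi : Function.Injective g) :
    ∃ (R : Type u) (_ : CompleteLattice R) (_ : QModule Q R) (f' : M → R) (g' : N → R),
      IsQModHom Q f' ∧ IsQModHom Q g' ∧
        Function.Injective f' ∧ Function.Injective g' ∧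
        f' ∘ f = g' ∘ g ∧
        Set.range f' ∩ Set.range g' = Set.range (f' ∘ f) := by
  classical
  letI instInf : InfSet {x : M × N // x ∈ amalgC f g} :=
    ⟨fun S => ⟨sInf (Subtype.val '' S),
      amalgC_sInf f g (by rintro c ⟨x, hx, rfl⟩; exact x.2)⟩⟩
  letI instCL : CompleteLattice {x : M × N // x ∈ amalgC f g} :=
    completeLatticeOfInf _ (fun S =>
      ⟨fun c hc => Subtype.coe_le_coe.mp (sInf_le (Set.mem_image_of_mem _ hc)),
       fun d hd => Subtype.coe_le_coe.mp (le_sInf (by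
        rintro y ⟨x, hx, rfl⟩
        exact Subtype.coe_le_coe.mpr (hd hx)))⟩)
  have hsSup : ∀ S : Set {x : M × N // x ∈ amalgC f g},
      (sSup S).val = amalgCl f g (⨆ x ∈ S, x.val) := by
    intro S
    have hub : sSup S ≤ ⟨amalgCl f g (⨆ x ∈ S, x.val), amalgCl_mem f g _⟩ :=
      sSup_le fun x hx => Subtype.coe_le_coe.mp
        ((le_iSup₂ (f := fun (x : {x : M × N // x ∈ amalgC f g}) (_ : x ∈ S) => x.val) x hx).trans
          (le_amalgCl f g _))
    have hlb : (⟨amalgCl f g (⨆ x ∈ S, x.val), amalgCl_mem f g _⟩ :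
        {x : M × N // x ∈ amalgC f g}) ≤ sSup S :=
      Subtype.coe_le_coe.mp (amalgCl_le f g (sSup S).2
        (iSup₂_le fun x hx => Subtype.coe_le_coe.mpr (le_sSup hx)))
    exact congrArg Subtype.val (le_antisymm hub hlb)
  letI instSMul : SMul Q {x : M × N // x ∈ amalgC f g} :=
    ⟨fun q c => ⟨amalgCl f g (q • c.val), amalgCl_mem f g _⟩⟩
  letI instQM : QModule Q {x : M × N // x ∈ amalgC f g} :=
    { toSMul := instSMul
      one_smul' := fun c => Subtype.ext (by
        show amalgCl f g ((1 : Q) • c.val) = c.val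
        rw [show (1 : Q) • c.val = c.val from QModule.one_smul' c.val, amalgCl_eq f g c.2])
      mul_smul' := fun a b c => Subtype.ext (by
        show amalgCl f g ((a * b) • c.val) = amalgCl f g (a • amalgCl f g (b • c.val))
        rw [QModule.mul_smul', amalgCl_smul f g hf hg])
      smul_sSup := fun a S => Subtype.ext (by
        show amalgCl f g (a • (sSup S).val) = (⨆ m ∈ S, a • m).val
        rw [hsSup, amalgCl_smul f g hf hg]
        rw [show (⨆ m ∈ S, a • m) = sSup ((fun m => a • m) '' S) from (sSup_image).symm,
          hsSup, iSup_image]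
        have h2 : a • (⨆ x ∈ S, x.val) = ⨆ x ∈ S, a • x.val := by
          rw [← sSup_image, QModule.smul_sSup, iSup_image]
        rw [h2]
        exact (amalgCl_biSup f g S fun m => a • m.val).symm)
      sSup_smul := fun s c => Subtype.ext (by
        show amalgCl f g ((sSup s : Q) • c.val) = (⨆ a ∈ s, a • c).val
        rw [QModule.sSup_smul]
        rw [show (⨆ a ∈ s, a • c) = sSup ((fun a => a • c) '' s) from (sSup_image).symm,
          hsSup, iSup_image]
        exact (amalgCl_biSup f g s fun a => a • c.val).symm) }
  let f' : M → {x : M × N // x ∈ amalgC f g} :=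
    fun m => ⟨amalgCl f g (m, ⊥), amalgCl_mem f g _⟩
  let g' : N → {x : M × N // x ∈ amalgC f g} :=
    fun n => ⟨amalgCl f g (⊥, n), amalgCl_mem f g _⟩
  have hcomm : ∀ p : P, f' (f p) = g' (g p) := by
    intro p
    apply Subtype.ext
    show amalgCl f g (f p, ⊥) = amalgCl f g (⊥, g p)
    rw [amalgCl_mk_bot f g hf hg hgi, amalgCl_bot_mk f g hf hg hfi]
    have e1 : {p' | f p' ≤ f p} = {p' | p' ≤ p} := Set.ext fun p' => hom_le_iff hf hfi
    have e2 : {p' | g p' ≤ g p} = {p' | p' ≤ p} := Set.ext fun p' => hom_le_iff hg hgi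
    rw [e1, e2, sSup_le_self]
  refine ⟨{x : M × N // x ∈ amalgC f g}, instCL, instQM, f', g', ?_, ?_, ?_, ?_, ?_, ?_⟩
  · constructor
    · intro S
      apply Subtype.ext
      have hR : (⨆ x ∈ S, f' x).val = amalgCl f g (⨆ x ∈ S, ((x : M), (⊥ : N))) := by
        rw [show (⨆ x ∈ S, f' x) = sSup (f' '' S) from (sSup_image).symm, hsSup, iSup_image]
        exact amalgCl_biSup f g S fun x => (x, ⊥)
      rw [hR]
      show amalgCl f g (sSup S, ⊥) = _
      congr 1
      apply Prod.ext
      · simp [Prod.fst_iSup, sSup_eq_iSup]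
      · simp [Prod.snd_iSup]
    · intro q m
      apply Subtype.ext
      show amalgCl f g (q • m, ⊥) = amalgCl f g (q • amalgCl f g (m, ⊥))
      rw [amalgCl_smul f g hf hg]
      congr 1
      apply Prod.ext
      · simp
      · simp [qsmul_bot]
  · constructor
    · intro S
      apply Subtype.ext
      have hR : (⨆ x ∈ S, g' x).val = amalgCl f g (⨆ x ∈ S, ((⊥ : M), (x : N))) := by
        rw [show (⨆ x ∈ S, g' x) = sSup (g' '' S) from (sSup_image).symm, hsSup, iSup_image]
        exact amalgCl_biSup f g S fun x => (⊥, x)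
      rw [hR]
      show amalgCl f g (⊥, sSup S) = _
      congr 1
      apply Prod.ext
      · simp [Prod.fst_iSup]
      · simp [Prod.snd_iSup, sSup_eq_iSup]
    · intro q n
      apply Subtype.ext
      show amalgCl f g (⊥, q • n) = amalgCl f g (q • amalgCl f g (⊥, n))
      rw [amalgCl_smul f g hf hg]
      congr 1
      apply Prod.ext
      · simp [qsmul_bot]
      · simp
  · intro m1 m2 h
    have hval : amalgCl f g (m1, ⊥) = amalgCl f g (m2, ⊥) := congrArg Subtype.val h
    rw [amalgCl_mk_bot f g hf hg hgi, amalgCl_mk_bot f g hf hg hgi] at hval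
    exact (Prod.ext_iff.mp hval).1
  · intro n1 n2 h
    have hval : amalgCl f g (⊥, n1) = amalgCl f g (⊥, n2) := congrArg Subtype.val h
    rw [amalgCl_bot_mk f g hf hg hfi, amalgCl_bot_mk f g hf hg hfi] at hval
    exact (Prod.ext_iff.mp hval).2
  · exact funext hcomm
  · apply Set.ext
    intro c
    constructor
    · rintro ⟨⟨m, hm⟩, ⟨n, hn⟩⟩
      have hval : amalgCl f g (m, ⊥) = amalgCl f g (⊥, n) :=
        congrArg Subtype.val (hm.trans hn.symm)
      rw [amalgCl_mk_bot f g hf hg hgi, amalgCl_bot_mk f g hf hg hfi] at hval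
      have hm' : m = f (sSup {p | g p ≤ n}) := (Prod.ext_iff.mp hval).1
      exact ⟨sSup {p | g p ≤ n}, by rw [Function.comp_apply, ← hm']; exact hm⟩
    · rintro ⟨p, rfl⟩
      exact ⟨⟨f p, rfl⟩, ⟨g p, (hcomm p).symm⟩⟩
end
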